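/- Let X be a compact metric space, let α > 0 and let q > 1. Then the set {μ ∈ M : D⁺_μ(q) ≥ α} is a G_δ subset of the space M of Borel probability measures on X with the weak topology; consequently, {μ ∈ M : D⁺_μ(q) = +∞} is also a G_δ subset of M. -/

import Mathlib

open MeasureTheory Filter Topology Metric Set
open scoped ENNReal NNReal

section Defs

variable {X : Type*} [MetricSpace X] [MeasurableSpace X]

/-- The topological support of a Borel measure on a metric space: the set of points all of whose
balls have positive measure. -/
def msupp (μ : Measure X) : Set X := {x : X | ∀ ε > 0, 0 < μ (ball x ε)}

/-- The energy function `I_μ(q, ε) = ∫_{supp μ} μ(B(x,ε))^(q-1) dμ(x)`. -/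
noncomputable def energyI (μ : Measure X) (q ε : ℝ) : ℝ :=
  ∫ x in msupp μ, (μ (ball x ε)).toReal ^ (q - 1) ∂μ

/-- The lower `q`-generalized fractal dimension
`D⁻_μ(q) = liminf_{ε→0⁺} log I_μ(q,ε) / ((q-1) log ε)` (as an extended real number). -/
noncomputable def Dlower (μ : Measure X) (q : ℝ) : EReal :=
  liminf (fun ε : ℝ =>
    ((Real.log (energyI μ q ε) / ((q - 1) * Real.log ε) : ℝ) : EReal)) (𝓝[>] (0 : ℝ))

/-- The upper `q`-generalized fractal dimension
`D⁺_μ(q) = limsup_{ε→0⁺} log I_μ(q,ε) / ((q-1) log ε)` (as an extended real number). -/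
noncomputable def Dupper (μ : Measure X) (q : ℝ) : EReal :=
  limsup (fun ε : ℝ =>
    ((Real.log (energyI μ q ε) / ((q - 1) * Real.log ε) : ℝ) : EReal)) (𝓝[>] (0 : ℝ))

/-- `∫_{supp μ} log μ(B(x,ε)) dμ(x)`, the numerator in the entropy dimension. -/
noncomputable def entNum (μ : Measure X) (ε : ℝ) : ℝ :=
  ∫ x in msupp μ, Real.log (μ (ball x ε)).toReal ∂μ

/-- The lower entropy dimension
`D⁻_μ(1) = liminf_{ε→0⁺} (∫_{supp μ} log μ(B(x,ε)) dμ(x)) / log ε`. -/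
noncomputable def D1lower (μ : Measure X) : EReal :=
  liminf (fun ε : ℝ => ((entNum μ ε / Real.log ε : ℝ) : EReal)) (𝓝[>] (0 : ℝ))

/-- The upper entropy dimension
`D⁺_μ(1) = limsup_{ε→0⁺} (∫_{supp μ} log μ(B(x,ε)) dμ(x)) / log ε`. -/
noncomputable def D1upper (μ : Measure X) : EReal :=
  limsup (fun ε : ℝ => ((entNum μ ε / Real.log ε : ℝ) : EReal)) (𝓝[>] (0 : ℝ))

/-- A measure is `T`-invariant if `μ(T⁻¹ s) = μ s` for every measurable `s`. -/
def IsInvariantMeasure (T : X → X) (μ : Measure X) : Prop :=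
  ∀ s : Set X, MeasurableSet s → μ (T ⁻¹' s) = μ s

/-- `M(T)`: the set of `T`-invariant Borel probability measures on `X`. -/
def invSet (T : X → X) : Set (ProbabilityMeasure X) :=
  {μ : ProbabilityMeasure X | IsInvariantMeasure T μ.toMeasure}

/-- A `T`-periodic measure: `μ = (1/k) ∑_{i<k} δ_{T^i x}` for a `T`-periodic point `x`
of period `k`. -/
def IsPeriodicMeasure (T : X → X) (μ : ProbabilityMeasure X) : Prop :=
  ∃ (x : X) (k : ℕ), 0 < k ∧ T^[k] x = x ∧
    μ.toMeasure = (k : ℝ≥0∞)⁻¹ • ∑ i ∈ Finset.range k, Measure.dirac (T^[i] x)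

/-- The upper Hausdorff dimension of a measure:
`dim_H^+(μ) = inf {dimH E | E Borel, μ(X \ E) = 0}`. -/
noncomputable def dimHplus (μ : Measure X) : ℝ≥0∞ :=
  ⨅ (E : Set X) (_ : MeasurableSet E) (_ : μ Eᶜ = 0), dimH E

/-- The lower Hausdorff dimension of a measure:
`dim_H^-(μ) = inf {dimH E | E Borel, μ(E) > 0}`. -/
noncomputable def dimHminus (μ : Measure X) : ℝ≥0∞ :=
  ⨅ (E : Set X) (_ : MeasurableSet E) (_ : 0 < μ E), dimH E

/-- The return time `τ_s(x) = inf {k ≥ 1 | T^k x ∈ B(x,s)}`. -/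
noncomputable def tauRet (T : X → X) (s : ℝ) (x : X) : ℕ :=
  sInf {k : ℕ | 0 < k ∧ T^[k] x ∈ ball x s}

/-- The lower recurrence rate `R̲(x) = liminf_{s→0⁺} log τ_s(x) / (-log s)`. -/
noncomputable def Rlower (T : X → X) (x : X) : EReal :=
  liminf (fun s : ℝ =>
    ((Real.log (tauRet T s x : ℝ) / (-Real.log s) : ℝ) : EReal)) (𝓝[>] (0 : ℝ))

open Classical in
/-- The lower local dimension `d̲_μ(x) = liminf_{ε→0⁺} log μ(B(x,ε)) / log ε` when all balls
around `x` have positive measure, and `+∞` otherwise. -/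
noncomputable def dLoc (μ : Measure X) (x : X) : EReal :=
  if (∀ ε > 0, 0 < μ (ball x ε)) then
    liminf (fun ε : ℝ =>
      ((Real.log (μ (ball x ε)).toReal / Real.log ε : ℝ) : EReal)) (𝓝[>] (0 : ℝ))
  else ⊤

/-- The auxiliary continuous kernel `f^ε_x(y)`: equal to `1` if `dist x y ≤ ε`, to
`2 - dist x y / ε` if `ε ≤ dist x y ≤ 2ε`, and to `0` if `dist x y ≥ 2ε`. -/
noncomputable def fker (ε : ℝ) (x y : X) : ℝ :=
  if dist x y ≤ ε then 1 else if dist x y ≤ 2 * ε then 2 - dist x y / ε else 0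

/-- `f_ε(μ, x) = ∫ f^ε_x(y) dμ(y)`. -/
noncomputable def feps (ε : ℝ) (μ : Measure X) (x : X) : ℝ := ∫ y, fker ε x y ∂μ

/-- `G` is a finite covering of `X` by open balls of radius `ε` (given by its finite set of
centers). -/
def IsBallCover (ε : ℝ) (G : Finset X) : Prop := (⋃ x ∈ G, ball x ε) = univ

/-- `S_μ(s,ε) = inf_G ∑_{x ∈ G} μ(B(x,ε))^s`, the infimum running over all finite coverings of
`X` by balls of radius `ε`. -/
noncomputable def Sfun (μ : Measure X) (s ε : ℝ) : ℝ :=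
  ⨅ G : {H : Finset X // IsBallCover ε H}, ∑ x ∈ G.val, (μ (ball x ε)).toReal ^ s

/-- `W_μ(s,ε) = inf_G ∑_{x ∈ G} f_ε(μ,x)^s`, the infimum running over all finite coverings of
`X` by balls of radius `ε`. -/
noncomputable def Wfun (μ : Measure X) (s ε : ℝ) : ℝ :=
  ⨅ G : {H : Finset X // IsBallCover ε H}, ∑ x ∈ G.val, (feps ε μ x) ^ s

/-- The regularized energy function `J_μ(q,ε) = ∫ f_ε(μ,x)^(q-1) dμ(x)`. -/
noncomputable def Jfun (μ : Measure X) (q ε : ℝ) : ℝ :=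
  ∫ x, (feps ε μ x) ^ (q - 1) ∂μ

end Defs

section Shift

variable {M : Type*} [MetricSpace M]

/-- The "cylinder ball" `B^n(x,ε) = {y | d(x_i, y_i) < ε for all |i| ≤ n}` in `M^ℤ`. -/
def cylBall (n : ℕ) (x : ℤ → M) (ε : ℝ) : Set (ℤ → M) :=
  {y : ℤ → M | ∀ i : ℤ, |i| ≤ (n : ℤ) → dist (x i) (y i) < ε}

/-- For `ε ∈ (0,1)`, the largest integer `n ≥ 0` with `ε < 1/(n²+1)`. -/
noncomputable def nZero (ε : ℝ) : ℕ := sSup {n : ℕ | ε < 1 / ((n : ℝ) ^ 2 + 1)}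

/-- The modified energy function `I^n_μ(q,ε) = ∫ μ(B^n(x,ε))^(q-1) dμ(x)`. -/
noncomputable def Icyl [MeasurableSpace (ℤ → M)] (μ : Measure (ℤ → M)) (n : ℕ) (q ε : ℝ) :
    ℝ :=
  ∫ x, (μ (cylBall n x ε)).toReal ^ (q - 1) ∂μ

end Shift



section Aux

variable {X : Type*} [MetricSpace X] [MeasurableSpace X]

lemma fker_eq_clamp {ε : ℝ} (hε : 0 < ε) (x y : X) :
    fker ε x y = max 0 (min 1 (2 - dist x y / ε)) := by
  unfold fker
  split_ifs with h1 h2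
  · rw [min_eq_left, max_eq_right] <;> nlinarith [div_le_one_of_le₀ h1 hε.le]
  · push_neg at h1
    have hd1 : 1 ≤ dist x y / ε := (le_div_iff₀ hε).2 (by linarith)
    have hd2 : dist x y / ε ≤ 2 := (div_le_iff₀ hε).2 (by linarith)
    rw [min_eq_right (by linarith), max_eq_right (by linarith)]
  · push_neg at h1 h2
    have hd2 : 2 ≤ dist x y / ε := (le_div_iff₀ hε).2 (by linarith)
    rw [max_eq_left (min_le_of_right_le (by linarith))]

lemma fker_nonneg {ε : ℝ} (hε : 0 < ε) (x y : X) : 0 ≤ fker ε x y := by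
  rw [fker_eq_clamp hε]; exact le_max_left _ _

lemma fker_le_one {ε : ℝ} (hε : 0 < ε) (x y : X) : fker ε x y ≤ 1 := by
  rw [fker_eq_clamp hε]; exact max_le zero_le_one (min_le_left _ _)

lemma fker_lip {ε : ℝ} (hε : 0 < ε) (x x' y : X) :
    |fker ε x y - fker ε x' y| ≤ dist x x' / ε := by
  rw [fker_eq_clamp hε, fker_eq_clamp hε]
  calc |max 0 (min 1 (2 - dist x y / ε)) - max 0 (min 1 (2 - dist x' y / ε))|
      ≤ |min 1 (2 - dist x y / ε) - min 1 (2 - dist x' y / ε)| := by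
        rw [max_comm 0 _, max_comm 0 _]; exact abs_max_sub_max_le_abs _ _ _
    _ ≤ |(2 - dist x y / ε) - (2 - dist x' y / ε)| := by
        have := abs_min_sub_min_le_max 1 (2 - dist x y / ε) 1 (2 - dist x' y / ε)
        simpa using this
    _ ≤ dist x x' / ε := by
        rw [show (2 - dist x y / ε) - (2 - dist x' y / ε) = (dist x' y - dist x y)/ε by ring]
        rw [abs_div, abs_of_pos hε]
        gcongr
        rw [abs_sub_comm]
        exact abs_dist_sub_le _ _ _

lemma fker_cont {ε : ℝ} (hε : 0 < ε) (x : X) : Continuous fun y => fker ε x y := by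
  have : (fun y => fker ε x y) = fun y => max 0 (min 1 (2 - dist x y / ε)) := by
    ext y; exact fker_eq_clamp hε x y
  rw [this]; fun_prop

lemma indicator_le_fker {ε : ℝ} (hε : 0 < ε) (x y : X) :
    (ball x ε).indicator (fun _ => (1:ℝ)) y ≤ fker ε x y := by
  by_cases h : y ∈ ball x ε
  · rw [indicator_of_mem h]
    unfold fker
    rw [if_pos]
    rw [mem_ball, dist_comm] at h
    exact h.le
  · rw [indicator_of_notMem h]; exact fker_nonneg hε x y

lemma fker_le_indicator {ε : ℝ} (hε : 0 < ε) (x y : X) :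
    fker ε x y ≤ (ball x (2*ε)).indicator (fun _ => (1:ℝ)) y := by
  by_cases h : y ∈ ball x (2*ε)
  · rw [indicator_of_mem h]; exact fker_le_one hε x y
  · rw [indicator_of_notMem h, fker_eq_clamp hε]
    rw [mem_ball, dist_comm, not_lt] at h
    apply max_le le_rfl
    refine min_le_of_right_le ?_
    rw [sub_nonpos, le_div_iff₀ hε] at *
    nlinarith

section FepsL

variable [OpensMeasurableSpace X] {ε : ℝ} (μ : Measure X)

lemma fker_integrable (hε : 0 < ε) (x : X) [IsFiniteMeasure μ] :
    Integrable (fun y => fker ε x y) μ :=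
  (integrable_const (1:ℝ)).mono' ((fker_cont hε x).aestronglyMeasurable)
    (ae_of_all _ fun y => by
      rw [Real.norm_eq_abs, abs_of_nonneg (fker_nonneg hε x y)]
      exact fker_le_one hε x y)

lemma feps_nonneg (hε : 0 < ε) (x : X) : 0 ≤ feps ε μ x :=
  integral_nonneg fun y => fker_nonneg hε x y

lemma feps_le_one (hε : 0 < ε) (x : X) [IsProbabilityMeasure μ] : feps ε μ x ≤ 1 := by
  calc ∫ y, fker ε x y ∂μ ≤ ∫ _, (1:ℝ) ∂μ :=
        integral_mono (fker_integrable μ hε x) (integrable_const 1) (fker_le_one hε x)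
    _ = 1 := by simp

lemma measure_ball_le_feps (hε : 0 < ε) (x : X) [IsFiniteMeasure μ] :
    (μ (ball x ε)).toReal ≤ feps ε μ x := by
  have h : ∫ y, (ball x ε).indicator (fun _ => (1:ℝ)) y ∂μ = (μ (ball x ε)).toReal := by
    rw [integral_indicator measurableSet_ball]; simp [measureReal_def]
  rw [← h]
  exact integral_mono ((integrable_const 1).indicator measurableSet_ball)
    (fker_integrable μ hε x) (indicator_le_fker hε x)

lemma feps_le_measure_ball (hε : 0 < ε) (x : X) [IsFiniteMeasure μ] :
    feps ε μ x ≤ (μ (ball x (2*ε))).toReal := by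
  have h : ∫ y, (ball x (2*ε)).indicator (fun _ => (1:ℝ)) y ∂μ = (μ (ball x (2*ε))).toReal := by
    rw [integral_indicator measurableSet_ball]; simp [measureReal_def]
  rw [← h]
  exact integral_mono (fker_integrable μ hε x)
    ((integrable_const 1).indicator measurableSet_ball) (fker_le_indicator hε x)

lemma feps_dist_le (hε : 0 < ε) (x x' : X) [IsProbabilityMeasure μ] :
    |feps ε μ x - feps ε μ x'| ≤ dist x x' / ε := by
  unfold feps
  rw [← integral_sub (fker_integrable μ hε x) (fker_integrable μ hε x')]
  have := norm_integral_le_of_norm_le_const (μ := μ)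
    (f := fun y => fker ε x y - fker ε x' y) (C := dist x x' / ε)
    (ae_of_all _ fun y => by rw [Real.norm_eq_abs]; exact fker_lip hε x x' y)
  simpa using this

lemma feps_continuous (hε : 0 < ε) [IsProbabilityMeasure μ] : Continuous (feps ε μ) := by
  rw [Metric.continuous_iff]
  intro b δ hδ
  refine ⟨δ * ε / 2, by positivity, fun a hab => ?_⟩
  rw [Real.dist_eq]
  calc |feps ε μ a - feps ε μ b| ≤ dist a b / ε := feps_dist_le μ hε a b
    _ < (δ * ε / 2) / ε := by gcongr
    _ < δ := by rw [div_lt_iff₀ hε]; nlinarith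

end FepsL

section Msupp

variable [SecondCountableTopology X] (μ : Measure X)

lemma msupp_compl_null : μ (msupp μ)ᶜ = 0 := by
  set S : Set (Set X) := {s | IsOpen s ∧ μ s = 0} with hS
  obtain ⟨T, hTc, hTS, hTU⟩ := TopologicalSpace.isOpen_sUnion_countable S fun s hs => hs.1
  have hU : μ (⋃₀ S) = 0 := by
    rw [← hTU, measure_sUnion_null_iff hTc]
    exact fun s hs => (hTS hs).2
  refine measure_mono_null (fun x hx => ?_) hU
  simp only [msupp, mem_compl_iff, mem_setOf_eq, not_forall] at hx
  obtain ⟨ε, hε, hball⟩ := hx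
  push_neg at hball
  exact ⟨ball x ε, ⟨isOpen_ball, le_antisymm hball zero_le⟩, mem_ball_self hε⟩

lemma restrict_msupp : μ.restrict (msupp μ) = μ :=
  Measure.restrict_eq_self_of_ae_mem
    (by rw [MeasureTheory.ae_iff]; exact msupp_compl_null μ)

lemma measure_msupp_pos [IsProbabilityMeasure μ] : 0 < μ (msupp μ) := by
  by_contra h
  push_neg at h
  have h0 : μ (msupp μ) = 0 := le_antisymm h zero_le
  have : (1:ℝ≥0∞) ≤ 0 := by
    calc (1:ℝ≥0∞) = μ univ := (measure_univ).symm
      _ ≤ μ (msupp μ) + μ (msupp μ)ᶜ := by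
          rw [← union_compl_self (msupp μ)]; exact measure_union_le _ _
      _ = 0 := by rw [h0, msupp_compl_null μ, add_zero]
  simp at this

end Msupp

section MeasBall

variable (μ : Measure X) {ε : ℝ}

lemma lsc_measure_ball (hε : 0 < ε) : LowerSemicontinuous fun x => μ (ball x ε) := by
  intro x c hc
  have hmono : Monotone fun n : ℕ => closedBall x (ε - ε / (n+1)) := by
    intro m n hmn
    apply closedBall_subset_closedBall
    have : (m:ℝ) + 1 ≤ (n:ℝ) + 1 := by exact_mod_cast Nat.succ_le_succ hmn
    gcongr
  have hunion : ball x ε = ⋃ n : ℕ, closedBall x (ε - ε / (n+1)) := by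
    ext y
    simp only [mem_ball, mem_iUnion, mem_closedBall]
    constructor
    · intro hy
      have h2 : 0 < ε - dist y x := by linarith
      obtain ⟨n, hn⟩ := exists_nat_gt (ε / (ε - dist y x))
      refine ⟨n, ?_⟩
      have hn1 : ε / (ε - dist y x) < (n:ℝ) + 1 := hn.trans (by linarith)
      rw [div_lt_iff₀ h2] at hn1
      have hpos : (0:ℝ) < (n:ℝ) + 1 := by positivity
      have hd : ε/((n:ℝ)+1) ≤ ε - dist y x := (div_le_iff₀ hpos).2 (by nlinarith)
      linarith
    · intro ⟨n, hn⟩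
      have : 0 < ε / ((n:ℝ)+1) := by positivity
      calc dist y x ≤ ε - ε/((n:ℝ)+1) := hn
        _ < ε := by linarith
  have hsup : μ (ball x ε) = ⨆ n : ℕ, μ (closedBall x (ε - ε / (n+1))) := by
    rw [hunion]
    exact (hmono.directed_le).measure_iUnion
  change c < μ (ball x ε) at hc
  rw [hsup] at hc
  obtain ⟨n, hn⟩ := lt_iSup_iff.mp hc
  have hkey : ∀ x' : X, dist x' x < ε/(n+1) → c < μ (ball x' ε) := by
    intro x' hx'
    refine hn.trans_le (measure_mono fun y hy => ?_)
    simp only [mem_closedBall] at hy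
    simp only [mem_ball]
    calc dist y x' ≤ dist y x + dist x x' := dist_triangle _ _ _
      _ ≤ (ε - ε/(n+1)) + dist x x' := by linarith
      _ < (ε - ε/(n+1)) + ε/(n+1) := by rw [dist_comm]; linarith
      _ = ε := by ring
  have : ∀ᶠ x' in 𝓝 x, dist x' x < ε/(n+1) := by
    apply Metric.eventually_nhds_iff_ball.mpr
    exact ⟨ε/(n+1), by positivity, fun y hy => by simpa [mem_ball] using hy⟩
  exact this.mono hkey

lemma measurable_measure_ball' [OpensMeasurableSpace X] (hε : 0 < ε) :
    Measurable fun x => (μ (ball x ε)).toReal :=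
  (lsc_measure_ball μ hε).measurable.ennreal_toReal

end MeasBall

section IJ

variable [OpensMeasurableSpace X] [SecondCountableTopology X]
  (μ : Measure X) [IsProbabilityMeasure μ] {q ε : ℝ}

lemma toReal_meas_le_one (s : Set X) : (μ s).toReal ≤ 1 := by
  have := ENNReal.toReal_mono ENNReal.one_ne_top (prob_le_one (μ := μ) (s := s))
  simpa using this

lemma integrable_Iball (hq : 1 < q) (hε : 0 < ε) :
    Integrable (fun x => (μ (ball x ε)).toReal ^ (q-1)) μ := by
  refine (integrable_const (1:ℝ)).mono' ?_ (ae_of_all _ fun x => ?_)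
  · exact ((Real.continuous_rpow_const (by linarith)).measurable.comp
      (measurable_measure_ball' μ hε)).aestronglyMeasurable
  · rw [Real.norm_eq_abs, abs_of_nonneg (Real.rpow_nonneg ENNReal.toReal_nonneg _)]
    exact Real.rpow_le_one ENNReal.toReal_nonneg (toReal_meas_le_one μ _) (by linarith)

lemma integrable_Jint (hq : 1 < q) (hε : 0 < ε) :
    Integrable (fun x => feps ε μ x ^ (q-1)) μ := by
  refine (integrable_const (1:ℝ)).mono' ?_ (ae_of_all _ fun x => ?_)
  · exact ((Real.continuous_rpow_const (by linarith)).comp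
      (feps_continuous μ hε)).measurable.aestronglyMeasurable
  · rw [Real.norm_eq_abs, abs_of_nonneg (Real.rpow_nonneg (feps_nonneg μ hε x) _)]
    exact Real.rpow_le_one (feps_nonneg μ hε x) (feps_le_one μ hε x) (by linarith)

lemma energyI_eq : energyI μ q ε = ∫ x, (μ (ball x ε)).toReal ^ (q-1) ∂μ := by
  rw [energyI, restrict_msupp]

lemma energyI_le_one (hq : 1 < q) (hε : 0 < ε) : energyI μ q ε ≤ 1 := by
  rw [energyI_eq]
  calc ∫ x, (μ (ball x ε)).toReal ^ (q-1) ∂μ ≤ ∫ _, (1:ℝ) ∂μ :=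
        integral_mono (integrable_Iball μ hq hε) (integrable_const 1) (fun x =>
          Real.rpow_le_one ENNReal.toReal_nonneg (toReal_meas_le_one μ _) (by linarith))
    _ = 1 := by simp

lemma Jfun_le_one (hq : 1 < q) (hε : 0 < ε) : Jfun μ q ε ≤ 1 := by
  rw [Jfun]
  calc ∫ x, feps ε μ x ^ (q-1) ∂μ ≤ ∫ _, (1:ℝ) ∂μ :=
        integral_mono (integrable_Jint μ hq hε) (integrable_const 1) (fun x =>
          Real.rpow_le_one (feps_nonneg μ hε x) (feps_le_one μ hε x) (by linarith))
    _ = 1 := by simp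

lemma toReal_ball_pos (hε : 0 < ε) {x : X} (hx : x ∈ msupp μ) :
    0 < (μ (ball x ε)).toReal :=
  ENNReal.toReal_pos (hx ε hε).ne' (measure_ne_top μ _)

lemma energyI_pos (hq : 1 < q) (hε : 0 < ε) : 0 < energyI μ q ε := by
  rw [energyI_eq]
  rw [integral_pos_iff_support_of_nonneg_ae
    (ae_of_all _ fun x => Real.rpow_nonneg ENNReal.toReal_nonneg _)
    (integrable_Iball μ hq hε)]
  refine lt_of_lt_of_le (measure_msupp_pos μ) (measure_mono fun x hx => ?_)
  exact (Real.rpow_pos_of_pos (toReal_ball_pos μ hε hx) _).ne'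

lemma Jfun_pos (hq : 1 < q) (hε : 0 < ε) : 0 < Jfun μ q ε := by
  rw [Jfun]
  rw [integral_pos_iff_support_of_nonneg_ae
    (ae_of_all _ fun x => Real.rpow_nonneg (feps_nonneg μ hε x) _)
    (integrable_Jint μ hq hε)]
  refine lt_of_lt_of_le (measure_msupp_pos μ) (measure_mono fun x hx => ?_)
  have h1 : 0 < feps ε μ x := (toReal_ball_pos μ hε hx).trans_le (measure_ball_le_feps μ hε x)
  exact (Real.rpow_pos_of_pos h1 _).ne'

lemma energyI_le_Jfun (hq : 1 < q) (hε : 0 < ε) : energyI μ q ε ≤ Jfun μ q ε := by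
  rw [energyI_eq, Jfun]
  exact integral_mono (integrable_Iball μ hq hε) (integrable_Jint μ hq hε) fun x =>
    Real.rpow_le_rpow ENNReal.toReal_nonneg (measure_ball_le_feps μ hε x) (by linarith)

lemma Jfun_le_energyI (hq : 1 < q) (hε : 0 < ε) : Jfun μ q ε ≤ energyI μ q (2*ε) := by
  rw [energyI_eq, Jfun]
  exact integral_mono (integrable_Jint μ hq hε) (integrable_Iball μ hq (by linarith)) fun x =>
    Real.rpow_le_rpow (feps_nonneg μ hε x) (feps_le_measure_ball μ hε x) (by linarith)

end IJ

section Cont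
open scoped BoundedContinuousFunction

variable [OpensMeasurableSpace X] [CompactSpace X] [SecondCountableTopology X]

noncomputable def kerBCF {ε : ℝ} (hε : 0 < ε) (x : X) : X →ᵇ ℝ :=
  BoundedContinuousFunction.mkOfCompact ⟨fun y => fker ε x y, fker_cont hε x⟩

lemma integral_kerBCF {ε : ℝ} (hε : 0 < ε) (x : X) (μ : Measure X) :
    ∫ y, kerBCF hε x y ∂μ = feps ε μ x := rfl

noncomputable def hBCF {ε q : ℝ} (hε : 0 < ε) (hq : 1 < q) (μ : Measure X)
    [IsProbabilityMeasure μ] : X →ᵇ ℝ :=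
  BoundedContinuousFunction.mkOfCompact
    ⟨fun x => feps ε μ x ^ (q-1),
      (Real.continuous_rpow_const (by linarith)).comp (feps_continuous μ hε)⟩

lemma feps_tendsto_uniform {ε : ℝ} (hε : 0 < ε) (μ₀ : ProbabilityMeasure X) {δ : ℝ}
    (hδ : 0 < δ) :
    ∀ᶠ μ : ProbabilityMeasure X in 𝓝 μ₀,
      ∀ x : X, |feps ε (μ : Measure X) x - feps ε (μ₀ : Measure X) x| < δ := by
  have hr : 0 < ε * δ / 8 := by positivity
  obtain ⟨t, -, htfin, htcover⟩ := finite_cover_balls_of_compact (isCompact_univ : IsCompact (univ : Set X)) hr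
  have hev : ∀ᶠ μ : ProbabilityMeasure X in 𝓝 μ₀,
      ∀ c ∈ t, |feps ε (μ : Measure X) c - feps ε (μ₀ : Measure X) c| < δ / 2 := by
    rw [eventually_all_finite htfin]
    intro c _
    have hcont := MeasureTheory.ProbabilityMeasure.continuous_integral_boundedContinuousFunction
      (X := X) (kerBCF hε c)
    have htd : Tendsto (fun μ : ProbabilityMeasure X => feps ε (μ : Measure X) c) (𝓝 μ₀)
        (𝓝 (feps ε (μ₀ : Measure X) c)) := by
      simpa only [integral_kerBCF] using hcont.tendsto μ₀
    have := Metric.tendsto_nhds.mp htd (δ/2) (by positivity)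
    simpa only [Real.dist_eq] using this
  filter_upwards [hev] with μ hμ
  intro x
  have hx : x ∈ ⋃ y ∈ t, ball y (ε * δ / 8) := htcover (mem_univ x)
  simp only [mem_iUnion, exists_prop] at hx
  obtain ⟨c, hct, hxc⟩ := hx
  rw [mem_ball] at hxc
  have l1 : |feps ε (μ : Measure X) x - feps ε (μ : Measure X) c| ≤ dist x c / ε :=
    feps_dist_le _ hε x c
  have l2 : |feps ε (μ₀ : Measure X) c - feps ε (μ₀ : Measure X) x| ≤ dist c x / ε :=
    feps_dist_le _ hε c x
  have l3 := hμ c hct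
  have hde : dist x c / ε < δ / 8 := by
    rw [div_lt_iff₀ hε]
    calc dist x c < ε * δ / 8 := hxc
      _ = δ / 8 * ε := by ring
  have hde' : dist c x / ε < δ / 8 := by rwa [dist_comm]
  calc |feps ε (μ : Measure X) x - feps ε (μ₀ : Measure X) x|
      ≤ |feps ε (μ : Measure X) x - feps ε (μ : Measure X) c|
        + |feps ε (μ : Measure X) c - feps ε (μ₀ : Measure X) c|
        + |feps ε (μ₀ : Measure X) c - feps ε (μ₀ : Measure X) x| := by
        have := abs_sub_le (feps ε (μ : Measure X) x) (feps ε (μ : Measure X) c)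
          (feps ε (μ₀ : Measure X) x)
        have h2 := abs_sub_le (feps ε (μ : Measure X) c) (feps ε (μ₀ : Measure X) c)
          (feps ε (μ₀ : Measure X) x)
        linarith
    _ < δ/8 + δ/2 + δ/8 := by
        apply add_lt_add (add_lt_add (l1.trans_lt hde) l3) (l2.trans_lt hde')
    _ ≤ δ := by linarith

lemma continuous_Jfun {q ε : ℝ} (hq : 1 < q) (hε : 0 < ε) :
    Continuous fun μ : ProbabilityMeasure X => Jfun (μ : Measure X) q ε := by
  rw [continuous_iff_continuousAt]
  intro μ₀
  rw [ContinuousAt, Metric.tendsto_nhds]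
  intro δ hδ
  -- uniform continuity of t ↦ t^(q-1) on [0,1]
  have hUC := (isCompact_Icc (a := (0:ℝ)) (b := 1)).uniformContinuousOn_of_continuous
    ((Real.continuous_rpow_const (q := q - 1) (by linarith)).continuousOn)
  rw [Metric.uniformContinuousOn_iff] at hUC
  obtain ⟨δ₁, hδ₁, hUC⟩ := hUC (δ/4) (by positivity)
  have E1 := feps_tendsto_uniform hε μ₀ hδ₁
  have E2 : ∀ᶠ μ : ProbabilityMeasure X in 𝓝 μ₀,
      |(∫ x, feps ε (μ₀ : Measure X) x ^ (q-1) ∂(μ : Measure X))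
        - ∫ x, feps ε (μ₀ : Measure X) x ^ (q-1) ∂(μ₀ : Measure X)| < δ / 2 := by
    have hcont := MeasureTheory.ProbabilityMeasure.continuous_integral_boundedContinuousFunction
      (X := X) (hBCF hε hq (μ₀ : Measure X))
    have := Metric.tendsto_nhds.mp (hcont.tendsto μ₀) (δ/2) (by positivity)
    simpa only [Real.dist_eq, hBCF, BoundedContinuousFunction.mkOfCompact_apply,
      ContinuousMap.coe_mk] using this
  filter_upwards [E1, E2] with μ h1 h2
  rw [Real.dist_eq]
  have hfin : ∀ x : X, |feps ε (μ : Measure X) x ^ (q-1) - feps ε (μ₀ : Measure X) x ^ (q-1)|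
      ≤ δ / 4 := by
    intro x
    have hm : feps ε (μ : Measure X) x ∈ Icc (0:ℝ) 1 :=
      ⟨feps_nonneg _ hε x, feps_le_one _ hε x⟩
    have hm0 : feps ε (μ₀ : Measure X) x ∈ Icc (0:ℝ) 1 :=
      ⟨feps_nonneg _ hε x, feps_le_one _ hε x⟩
    have := hUC _ hm _ hm0 (by rw [Real.dist_eq]; exact h1 x)
    rw [Real.dist_eq] at this
    exact this.le
  have hint1 : Integrable (fun x => feps ε (μ : Measure X) x ^ (q-1)) (μ : Measure X) :=
    integrable_Jint _ hq hε
  have hint0 : Integrable (fun x => feps ε (μ₀ : Measure X) x ^ (q-1)) (μ : Measure X) := by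
    refine (integrable_const (1:ℝ)).mono' ?_ (ae_of_all _ fun x => ?_)
    · exact ((Real.continuous_rpow_const (by linarith)).comp
        (feps_continuous _ hε)).measurable.aestronglyMeasurable
    · rw [Real.norm_eq_abs, abs_of_nonneg (Real.rpow_nonneg (feps_nonneg _ hε x) _)]
      exact Real.rpow_le_one (feps_nonneg _ hε x) (feps_le_one _ hε x) (by linarith)
  have hstep1 : |Jfun (μ : Measure X) q ε
      - ∫ x, feps ε (μ₀ : Measure X) x ^ (q-1) ∂(μ : Measure X)| ≤ δ / 4 := by
    rw [Jfun, ← integral_sub hint1 hint0]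
    have := norm_integral_le_of_norm_le_const (μ := (μ : Measure X))
      (f := fun x => feps ε (μ : Measure X) x ^ (q-1) - feps ε (μ₀ : Measure X) x ^ (q-1))
      (C := δ/4) (ae_of_all _ fun x => by rw [Real.norm_eq_abs]; exact hfin x)
    simpa using this
  have hJ0 : Jfun (μ₀ : Measure X) q ε
      = ∫ x, feps ε (μ₀ : Measure X) x ^ (q-1) ∂(μ₀ : Measure X) := rfl
  rw [hJ0]
  set A := Jfun (μ : Measure X) q ε
  set B := ∫ x, feps ε (μ₀ : Measure X) x ^ (q-1) ∂(μ : Measure X)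
  set C := ∫ x, feps ε (μ₀ : Measure X) x ^ (q-1) ∂(μ₀ : Measure X)
  calc |A - C| ≤ |A - B| + |B - C| := abs_sub_le _ _ _
    _ < δ/4 + δ/2 := by
        have := lt_of_le_of_lt hstep1 (by linarith : δ/4 < δ/4 + (δ/4)/2)
        exact add_lt_add_of_le_of_lt hstep1 h2
    _ < δ := by linarith

end Cont

section Limsup

lemma ereal_le_of_forall_real_lt {x y : EReal}
    (h : ∀ b : ℝ, (b:EReal) < x → (b:EReal) ≤ y) : x ≤ y := by
  by_contra hc
  push_neg at hc
  obtain ⟨b, hb1, hb2⟩ := EReal.exists_between_coe_real hc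
  exact absurd (h b hb2) (not_le.mpr hb1)

lemma freq_double {P : ℝ → Prop} (h : ∃ᶠ ε in 𝓝[>](0:ℝ), P ε) :
    ∃ᶠ ε in 𝓝[>](0:ℝ), P (2*ε) := by
  by_contra hc
  rw [not_frequently] at hc
  have h2 : ∀ᶠ ε in 𝓝[>](0:ℝ), ¬ P (2*(1/2*ε)) := by
    have ht : Tendsto (fun ε:ℝ => 1/2*ε) (𝓝[>] 0) (𝓝[>] 0) := by
      refine tendsto_nhdsWithin_iff.mpr ⟨?_, ?_⟩
      · simpa using ((continuous_const_mul (1/2:ℝ)).tendsto 0).mono_left nhdsWithin_le_nhds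
      · filter_upwards [self_mem_nhdsWithin] with ε (hε : 0 < ε)
        show 0 < 1/2*ε
        positivity
    exact ht.eventually hc
  have h3 : ∀ᶠ ε in 𝓝[>](0:ℝ), ¬ P ε := by
    filter_upwards [h2] with ε hε
    rwa [show 2*(1/2*ε) = ε by ring] at hε
  exact (h.and_eventually h3).exists.elim fun ε hε => hε.2 hε.1

lemma freq_iff (P : ℝ → Prop) : (∃ᶠ ε in 𝓝[>](0:ℝ), P ε) ↔
    ∀ m : ℕ, ∃ ε : ℝ, 0 < ε ∧ ε < 1/(m+1) ∧ P ε := by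
  rw [(nhdsGT_basis (0:ℝ)).frequently_iff]
  constructor
  · intro h m
    obtain ⟨x, hx, hP⟩ := h (1/(m+1)) (by positivity)
    exact ⟨x, hx.1, hx.2, hP⟩
  · intro h δ hδ
    obtain ⟨m, hm⟩ := exists_nat_gt (1/δ)
    obtain ⟨x, h1, h2, hP⟩ := h m
    have hmδ : 1/((m:ℝ)+1) < δ := by
      rw [div_lt_iff₀ hδ] at hm
      rw [div_lt_iff₀ (by positivity)]
      nlinarith
    exact ⟨x, ⟨h1, h2.trans hmδ⟩, hP⟩

end Limsup

section Main

variable [CompactSpace X] [BorelSpace X] {q α : ℝ}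

lemma dupper_iff (hq : 1 < q) (hα : 0 < α) (μ : Measure X) [IsProbabilityMeasure μ] :
    (α : EReal) ≤ Dupper μ q ↔
      ∀ k : ℕ, ∃ᶠ ε in 𝓝[>](0:ℝ),
        α - α/(k+1) < Real.log (Jfun μ q ε) / ((q-1) * Real.log ε) := by
  have hq1 : 0 < q - 1 := by linarith
  set F : ℝ → ℝ := fun ε => Real.log (energyI μ q ε) / ((q - 1) * Real.log ε) with hF
  set G : ℝ → ℝ := fun ε => Real.log (Jfun μ q ε) / ((q - 1) * Real.log ε) with hG
  have hDup : Dupper μ q = limsup (fun ε => ((F ε : ℝ) : EReal)) (𝓝[>] (0:ℝ)) := rfl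
  have hev : ∀ᶠ ε in 𝓝[>](0:ℝ), ε ∈ Ioo (0:ℝ) (1/2) :=
    Ioo_mem_nhdsGT_of_mem (by constructor <;> norm_num)
  constructor
  · -- from limsup F to frequently on G
    intro hD k
    have hckα : α - α/((k:ℝ)+1) < α := by
      have : 0 < α/((k:ℝ)+1) := by positivity
      linarith
    obtain ⟨c, hc1, hc2⟩ : ∃ c:ℝ, α - α/((k:ℝ)+1) < c ∧ c < α :=
      ⟨(α - α/((k:ℝ)+1) + α)/2, by linarith, by linarith⟩
    have hfreqF : ∃ᶠ ε in 𝓝[>](0:ℝ), c < F ε := by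
      have hlt : ((c:ℝ):EReal) < limsup (fun ε => ((F ε : ℝ) : EReal)) (𝓝[>] (0:ℝ)) :=
        lt_of_lt_of_le (EReal.coe_lt_coe_iff.mpr hc2) (hDup ▸ hD)
      have := frequently_lt_of_lt_limsup (h := hlt)
      exact this.mono fun ε h => EReal.coe_lt_coe_iff.mp h
    have hfreqF2 : ∃ᶠ ε in 𝓝[>](0:ℝ), c < F (2*ε) := freq_double hfreqF
    have h1 : Tendsto (fun ε:ℝ => Real.log 2 / Real.log ε) (𝓝[>](0:ℝ)) (𝓝 0) := by
      have hneg : Tendsto (fun ε:ℝ => -Real.log ε) (𝓝[>](0:ℝ)) atTop := by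
        rw [tendsto_neg_atTop_iff]
        exact Real.tendsto_log_nhdsGT_zero
      have h2 := hneg.const_div_atTop (Real.log 2)
      have : (fun ε:ℝ => Real.log 2 / Real.log ε) = fun ε:ℝ => -(Real.log 2 / -Real.log ε) := by
        funext ε; rw [div_neg, neg_neg]
      rw [this]
      simpa using h2.neg
    have hrtend : Tendsto (fun ε:ℝ => c * (1 + Real.log 2 / Real.log ε)) (𝓝[>](0:ℝ)) (𝓝 c) := by
      have := (tendsto_const_nhds (x := (1:ℝ)) (f := 𝓝[>](0:ℝ))).add h1
      have h3 := this.const_mul c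
      simpa using h3
    have hev2 : ∀ᶠ ε in 𝓝[>](0:ℝ), α - α/((k:ℝ)+1) < c * (1 + Real.log 2 / Real.log ε) :=
      hrtend.eventually_const_lt hc1
    refine ((hfreqF2.and_eventually (hev2.and hev)).mono ?_)
    rintro ε ⟨hcF, hev2ε, hε0, hε2⟩
    have hε : 0 < ε := hε0
    have h2ε : 0 < 2*ε := by linarith
    have h2ε1 : 2*ε < 1 := by linarith
    have hlogε : Real.log ε < 0 := Real.log_neg hε (by linarith)
    have hlog2ε : Real.log (2*ε) < 0 := Real.log_neg h2ε h2ε1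
    have hDneg : (q-1) * Real.log ε < 0 := mul_neg_of_pos_of_neg hq1 hlogε
    have hD2neg : (q-1) * Real.log (2*ε) < 0 := mul_neg_of_pos_of_neg hq1 hlog2ε
    have hI2pos := energyI_pos μ hq h2ε
    have hJpos := Jfun_pos μ hq hε
    have hlogI2 : Real.log (energyI μ q (2*ε)) < c * ((q-1) * Real.log (2*ε)) := by
      have := hcF
      rw [hF, lt_div_iff_of_neg hD2neg] at this
      exact this
    have hlogJ : Real.log (Jfun μ q ε) ≤ Real.log (energyI μ q (2*ε)) :=
      Real.log_le_log hJpos (Jfun_le_energyI μ hq hε)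
    have hJlt : Real.log (Jfun μ q ε) < c * ((q-1) * Real.log (2*ε)) :=
      lt_of_le_of_lt hlogJ hlogI2
    have hGgt : c * ((q-1) * Real.log (2*ε)) / ((q-1) * Real.log ε) < G ε :=
      (div_lt_div_right_of_neg hDneg).mpr hJlt
    have heq : c * ((q-1) * Real.log (2*ε)) / ((q-1) * Real.log ε)
        = c * (1 + Real.log 2 / Real.log ε) := by
      rw [Real.log_mul (by norm_num) (ne_of_gt hε)]
      have hne1 : (q:ℝ) - 1 ≠ 0 := by linarith
      have hne2 : Real.log ε ≠ 0 := ne_of_lt hlogε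
      field_simp
      ring
    rw [heq] at hGgt
    exact lt_trans hev2ε hGgt
  · intro hk
    rw [hDup]
    apply ereal_le_of_forall_real_lt
    intro b hb
    rw [EReal.coe_lt_coe_iff] at hb
    obtain ⟨k, hkb⟩ : ∃ k:ℕ, b < α - α/(k+1) := by
      obtain ⟨k, hkgt⟩ := exists_nat_gt (α/(α - b))
      have hab : 0 < α - b := by linarith
      refine ⟨k, ?_⟩
      rw [div_lt_iff₀ hab] at hkgt
      have hk1 : (0:ℝ) < (k:ℝ)+1 := by positivity
      have hdlt : α/((k:ℝ)+1) < α - b := by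
        rw [div_lt_iff₀ hk1]
        nlinarith
      linarith
    have hfreq2 : ∃ᶠ ε in 𝓝[>](0:ℝ), (b:EReal) ≤ ((F ε : ℝ) : EReal) := by
      refine ((hk k).and_eventually hev).mono ?_
      rintro ε ⟨h1, hε0, hε2⟩
      have hε : 0 < ε := hε0
      have hlogε : Real.log ε < 0 := Real.log_neg hε (by linarith)
      have hDneg : (q-1) * Real.log ε < 0 := mul_neg_of_pos_of_neg hq1 hlogε
      have hIpos := energyI_pos μ hq hε
      have hGF : G ε ≤ F ε :=
        (div_le_div_right_of_neg hDneg).mpr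
          (Real.log_le_log hIpos (energyI_le_Jfun μ hq hε))
      have hbG : b < G ε := lt_trans hkb h1
      exact EReal.coe_le_coe_iff.mpr (by linarith)
    exact le_limsup_of_frequently_le hfreq2

lemma isOpen_G (hq : 1 < q) {ε : ℝ} (hε : 0 < ε) (hε1 : ε < 1) (c : ℝ) :
    IsOpen {μ : ProbabilityMeasure X |
      c < Real.log (Jfun μ.toMeasure q ε) / ((q-1) * Real.log ε)} := by
  have hlog : Real.log ε < 0 := Real.log_neg hε hε1
  have hD : (q-1) * Real.log ε < 0 := mul_neg_of_pos_of_neg (by linarith) hlog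
  have hset : {μ : ProbabilityMeasure X |
        c < Real.log (Jfun μ.toMeasure q ε) / ((q-1) * Real.log ε)}
      = (fun μ : ProbabilityMeasure X => Jfun μ.toMeasure q ε) ⁻¹'
          (Iio (Real.exp (c * ((q-1) * Real.log ε)))) := by
    ext μ
    simp only [mem_setOf_eq, mem_preimage, mem_Iio]
    rw [lt_div_iff_of_neg hD, ← Real.log_lt_iff_lt_exp (Jfun_pos μ.toMeasure hq hε)]
  rw [hset]
  exact (continuous_Jfun hq hε).isOpen_preimage _ isOpen_Iio

lemma isGdelta_ge (hα : 0 < α) (hq : 1 < q) :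
    IsGδ {μ : ProbabilityMeasure X | (α:EReal) ≤ Dupper μ.toMeasure q} := by
  have hset : {μ : ProbabilityMeasure X | (α:EReal) ≤ Dupper μ.toMeasure q}
      = ⋂ (k:ℕ), ⋂ (m:ℕ), ⋃ (ε:ℝ), ⋃ (_ : 0 < ε ∧ ε < 1/((m:ℝ)+1)),
          {μ : ProbabilityMeasure X |
            α - α/((k:ℝ)+1) < Real.log (Jfun μ.toMeasure q ε) / ((q-1) * Real.log ε)} := by
    ext μ
    rw [mem_setOf_eq, dupper_iff hq hα]
    simp only [mem_iInter, mem_iUnion, mem_setOf_eq]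
    constructor
    · intro h k m
      obtain ⟨ε, h1, h2, h3⟩ := (freq_iff _).mp (h k) m
      exact ⟨ε, ⟨h1, h2⟩, h3⟩
    · intro h k
      apply (freq_iff _).mpr
      intro m
      obtain ⟨ε, ⟨h1,h2⟩, h3⟩ := h k m
      exact ⟨ε, h1, h2, h3⟩
  rw [hset]
  refine IsGδ.iInter fun k => IsGδ.iInter fun m => IsOpen.isGδ ?_
  refine isOpen_iUnion fun ε => isOpen_iUnion fun hε => ?_
  have hε1 : ε < 1 := by
    refine lt_of_lt_of_le hε.2 ?_
    rw [div_le_one (by positivity)]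
    have : (0:ℝ) ≤ m := Nat.cast_nonneg m
    linarith
  exact isOpen_G hq hε.1 hε1 _

end Main

end Aux

/-- For a compact metric space `X`, `α > 0` and `q > 1`, the set
`{μ | D⁺_μ(q) ≥ α}` is a `G_δ` subset of the space of Borel probability measures on `X` with
the weak topology; consequently `{μ | D⁺_μ(q) = +∞}` is also a `G_δ` set. -/
theorem statement14 {X : Type*} [MetricSpace X] [CompactSpace X]
    [MeasurableSpace X] [BorelSpace X]
    (α q : ℝ) (hα : 0 < α) (hq : 1 < q) :
    IsGδ {μ : ProbabilityMeasure X | ((α : ℝ) : EReal) ≤ Dupper μ.toMeasure q} ∧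
    IsGδ {μ : ProbabilityMeasure X | Dupper μ.toMeasure q = (⊤ : EReal)} := by
  constructor
  · exact isGdelta_ge hα hq
  · have hset : {μ : ProbabilityMeasure X | Dupper μ.toMeasure q = (⊤ : EReal)}
        = ⋂ n:ℕ, {μ : ProbabilityMeasure X | (((n:ℝ)+1 : ℝ) : EReal) ≤ Dupper μ.toMeasure q} := by
      ext μ
      simp only [mem_setOf_eq, mem_iInter]
      constructor
      · intro h n; rw [h]; exact le_top
      · intro h
        rw [EReal.eq_top_iff_forall_lt]
        intro y
        obtain ⟨n, hn⟩ := exists_nat_gt y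
        refine lt_of_lt_of_le ?_ (h n)
        exact_mod_cast EReal.coe_lt_coe_iff.mpr (by linarith : y < (n:ℝ)+1)
      
    rw [hset]
    exact IsGδ.iInter fun n => isGdelta_ge (by positivity) hq
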